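/- Let t, r be real numbers with r > 0 and t > -log r. Then ∫_r^∞ dx/(x^2 (t + log x)^2) = e^t · li(1/(r e^t)) + 1/(r(t + log r)), and this quantity is positive. -/

import Mathlib

open Real Filter MeasureTheory Topology
open scoped ENNReal

/-- The logarithmic integral `li(x) = ∫_0^x dt / log t` (Cauchy principal value for `x > 1`). -/
noncomputable def li (x : ℝ) : ℝ :=
  if x ≤ 1 then ∫ t in (0:ℝ)..x, 1 / Real.log t
  else limUnder (nhdsWithin (0:ℝ) (Set.Ioi 0))
    (fun ε => (∫ t in (0:ℝ)..(1 - ε), 1 / Real.log t) + ∫ t in (1 + ε)..x, 1 / Real.log t)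

lemma li_of_le {x : ℝ} (hx : x ≤ 1) : li x = ∫ t in (0:ℝ)..x, 1 / Real.log t := if_pos hx

lemma invlog_tendsto_zero : Tendsto (fun u : ℝ => 1 / Real.log u) (𝓝[>] (0:ℝ)) (𝓝 0) := by
  have h : Tendsto (fun u : ℝ => -Real.log u) (𝓝[>] (0:ℝ)) atTop :=
    tendsto_neg_atBot_atTop.comp Real.tendsto_log_nhdsGT_zero
  have h2 := h.inv_tendsto_atTop.neg
  simpa [one_div, Pi.inv_def, inv_neg, neg_neg] using h2

lemma invlog_contOn {c : ℝ} (hc : c < 1) :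
    ContinuousOn (fun u : ℝ => 1 / Real.log u) (Set.Icc 0 c) := by
  intro u hu
  rcases eq_or_lt_of_le hu.1 with rfl | h0
  · have hsub : Set.Icc (0:ℝ) c ⊆ insert 0 (Set.Ioi 0) := by
      intro v hv
      rcases eq_or_lt_of_le hv.1 with rfl | hv0
      · exact Set.mem_insert _ _
      · exact Set.mem_insert_of_mem _ hv0
    have h1 : Tendsto (fun u : ℝ => 1 / Real.log u) (𝓝[insert 0 (Set.Ioi 0)] 0) (𝓝 0) := by
      rw [nhdsWithin_insert, tendsto_sup]
      constructor
      · simpa using tendsto_pure_nhds (fun u : ℝ => 1 / Real.log u) 0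
      · exact invlog_tendsto_zero
    have : Tendsto (fun u : ℝ => 1 / Real.log u) (𝓝[Set.Icc 0 c] 0) (𝓝 0) :=
      h1.mono_left (nhdsWithin_mono _ hsub)
    simpa [ContinuousWithinAt] using this
  · have hlog : Real.log u ≠ 0 := (Real.log_neg h0 (lt_of_le_of_lt hu.2 hc)).ne
    exact (continuousAt_const.div (Real.continuousAt_log h0.ne') hlog).continuousWithinAt

lemma li_hasDerivAt {y : ℝ} (h0 : 0 < y) (h1 : y < 1) :
    HasDerivAt li (1 / Real.log y) y := by
  have hint : IntervalIntegrable (fun u => 1 / Real.log u) volume 0 y := by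
    apply ContinuousOn.intervalIntegrable
    rw [Set.uIcc_of_le h0.le]
    exact invlog_contOn h1
  have hmeas : StronglyMeasurableAtFilter (fun u => 1 / Real.log u) (𝓝 y) :=
    ((measurable_const.div Real.measurable_log).stronglyMeasurable).stronglyMeasurableAtFilter
  have hcont : ContinuousAt (fun u => 1 / Real.log u) y :=
    continuousAt_const.div (Real.continuousAt_log h0.ne') (Real.log_neg h0 h1).ne
  have H := intervalIntegral.integral_hasDerivAt_right hint hmeas hcont
  refine H.congr_of_eventuallyEq ?_
  filter_upwards [Iio_mem_nhds h1] with u hu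
  exact li_of_le (le_of_lt hu)

lemma abs_li_le {y : ℝ} (h0 : 0 < y) (h1 : y ≤ Real.exp (-1)) : |li y| ≤ y := by
  have hy1 : y < 1 := lt_of_le_of_lt h1 (Real.exp_lt_one_iff.mpr (by norm_num))
  rw [li_of_le hy1.le]
  have H := intervalIntegral.norm_integral_le_of_norm_le_const
      (C := 1) (a := (0:ℝ)) (b := y) (f := fun u => 1 / Real.log u) ?_
  · simpa [Real.norm_eq_abs, abs_of_pos h0] using H
  · intro u hu
    rw [Set.uIoc_of_le h0.le] at hu
    have hlogy : Real.log y ≤ -1 := by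
      calc Real.log y ≤ Real.log (Real.exp (-1)) := Real.log_le_log h0 h1
        _ = -1 := Real.log_exp _
    have hlogu : Real.log u ≤ -1 :=
      le_trans (Real.log_le_log hu.1 hu.2) hlogy
    have h2 : (1:ℝ) ≤ |Real.log u| := by
      rw [abs_of_nonpos (by linarith)]; linarith
    calc ‖1 / Real.log u‖ = 1 / |Real.log u| := by
          rw [Real.norm_eq_abs, abs_div, abs_one]
      _ ≤ 1 := by rw [div_le_one (by linarith)]; exact h2

theorem stmt_6 (t r : ℝ) (hr : 0 < r) (ht : -Real.log r < t) :
    (∫ x in Set.Ioi r, 1 / (x^2 * (t + Real.log x)^2)) =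
      Real.exp t * li (1 / (r * Real.exp t)) + 1 / (r * (t + Real.log r)) ∧
    0 < ∫ x in Set.Ioi r, 1 / (x^2 * (t + Real.log x)^2) := by
  set F : ℝ → ℝ := fun x => Real.exp t * li (1 / (x * Real.exp t)) + 1 / (x * (t + Real.log x))
    with hF_def
  have hlx : ∀ x : ℝ, r ≤ x → 0 < t + Real.log x := by
    intro x hx
    have : Real.log r ≤ Real.log x := Real.log_le_log hr hx
    linarith
  -- derivative of -F
  have hderiv : ∀ x ∈ Set.Ici r, HasDerivAt (fun x => -F x) (1 / (x^2 * (t + Real.log x)^2)) x := by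
    intro x hx
    have hx0 : 0 < x := lt_of_lt_of_le hr hx
    have hlx0 : 0 < t + Real.log x := hlx x hx
    have hxe : 0 < x * Real.exp t := by positivity
    have ha1 : 1 / (x * Real.exp t) < 1 := by
      rw [div_lt_one hxe]
      have h : x * Real.exp t = Real.exp (Real.log x + t) := by
        rw [Real.exp_add, Real.exp_log hx0]
      rw [h]
      exact Real.one_lt_exp_iff.mpr (by linarith)
    have ha0 : 0 < 1 / (x * Real.exp t) := by positivity
    have h_li : HasDerivAt li (1 / Real.log (1 / (x * Real.exp t))) (1 / (x * Real.exp t)) :=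
      li_hasDerivAt ha0 ha1
    have inner : HasDerivAt (fun x : ℝ => 1 / (x * Real.exp t))
        (-(Real.exp t) / (x * Real.exp t)^2) x := by
      have h1 : HasDerivAt (fun x : ℝ => x * Real.exp t) (Real.exp t) x := by
        simpa using (hasDerivAt_id x).mul_const (Real.exp t)
      exact (h1.inv hxe.ne').congr_of_eventuallyEq (Filter.Eventually.of_forall fun y => one_div _)
    have comp := (h_li.comp x inner).const_mul (Real.exp t)
    have h2a : HasDerivAt (fun x : ℝ => x * (t + Real.log x)) ((t + Real.log x) + 1) x := by
      have hlog : HasDerivAt Real.log x⁻¹ x := Real.hasDerivAt_log hx0.ne'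
      have := (hasDerivAt_id x).mul (hlog.const_add t)
      refine this.congr_deriv ?_
      simp only [id, one_mul, mul_inv_cancel₀ hx0.ne']
    have h2 : HasDerivAt (fun x : ℝ => 1 / (x * (t + Real.log x)))
        (-((t + Real.log x) + 1) / (x * (t + Real.log x))^2) x := by
      exact (h2a.inv (by positivity : (0:ℝ) < x * (t + Real.log x)).ne').congr_of_eventuallyEq
        (Filter.Eventually.of_forall fun y => one_div _)
    have sum := (comp.add h2).neg
    refine HasDerivAt.congr_deriv sum ?_
    symm
    have hlog1 : Real.log (1 / (x * Real.exp t)) = -(t + Real.log x) := by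
      rw [one_div, Real.log_inv, Real.log_mul hx0.ne' (Real.exp_pos t).ne', Real.log_exp]
      ring
    have he : Real.exp t ≠ 0 := (Real.exp_pos t).ne'
    rw [hlog1]
    have e1 : Real.exp t * (1 / -(t + Real.log x) * (-(Real.exp t) / (x * Real.exp t)^2))
        = 1 / (x^2 * (t + Real.log x)) := by
      rw [mul_pow]
      field_simp
    rw [e1]
    field_simp
    ring
  have hpos : ∀ x ∈ Set.Ioi r, 0 ≤ 1 / (x^2 * (t + Real.log x)^2) := by
    intro x _
    positivity
  -- tendsto of F at top
  have hF2 : Tendsto (fun x : ℝ => 1 / (x * (t + Real.log x))) atTop (𝓝 0) := by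
    have h : Tendsto (fun x : ℝ => x * (t + Real.log x)) atTop atTop :=
      tendsto_id.atTop_mul_atTop₀ (tendsto_atTop_add_const_left _ t Real.tendsto_log_atTop)
    simp only [one_div]
    exact h.inv_tendsto_atTop
  have hA : Tendsto (fun x : ℝ => 1 / (x * Real.exp t)) atTop (𝓝 0) := by
    have h : Tendsto (fun x : ℝ => x * Real.exp t) atTop atTop :=
      tendsto_id.atTop_mul_const (Real.exp_pos t)
    simp only [one_div]
    exact h.inv_tendsto_atTop
  have hli0 : Tendsto (fun x : ℝ => li (1 / (x * Real.exp t))) atTop (𝓝 0) := by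
    apply squeeze_zero_norm' _ hA
    filter_upwards [eventually_ge_atTop (Real.exp (1 - t))] with x hx
    have hx0 : 0 < x := lt_of_lt_of_le (Real.exp_pos _) hx
    have hxe : 0 < x * Real.exp t := by positivity
    have hb : 1 / (x * Real.exp t) ≤ Real.exp (-1) := by
      rw [div_le_iff₀ hxe]
      have h1 : Real.exp (1 - t) * Real.exp t = Real.exp 1 := by
        rw [← Real.exp_add]; ring_nf
      have h2 : Real.exp 1 ≤ x * Real.exp t := by
        calc Real.exp 1 = Real.exp (1 - t) * Real.exp t := h1.symm
          _ ≤ x * Real.exp t := by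
            exact mul_le_mul_of_nonneg_right hx (Real.exp_pos t).le
      calc (1:ℝ) = Real.exp (-1) * Real.exp 1 := by rw [← Real.exp_add]; norm_num
        _ ≤ Real.exp (-1) * (x * Real.exp t) := by
            exact mul_le_mul_of_nonneg_left h2 (Real.exp_pos _).le
    have := abs_li_le (by positivity : 0 < 1 / (x * Real.exp t)) hb
    simpa [Real.norm_eq_abs] using this
  have hFtend : Tendsto (fun x => -F x) atTop (𝓝 0) := by
    have : Tendsto F atTop (𝓝 (Real.exp t * 0 + 0)) :=
      (tendsto_const_nhds.mul hli0).add hF2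
    simpa using this.neg
  have key := integral_Ioi_of_hasDerivAt_of_nonneg'
      (g := fun x => -F x) (g' := fun x => 1 / (x^2 * (t + Real.log x)^2))
      hderiv hpos hFtend
  have hint : IntegrableOn (fun x => 1 / (x^2 * (t + Real.log x)^2)) (Set.Ioi r) volume :=
    integrableOn_Ioi_deriv_of_nonneg' hderiv hpos hFtend
  have hval : (∫ x in Set.Ioi r, 1 / (x^2 * (t + Real.log x)^2)) = F r := by
    rw [key]; ring
  constructor
  · exact hval
  · rw [setIntegral_pos_iff_support_of_nonneg_ae
      (ae_of_all _ (fun x => by positivity)) hint]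
    have hsub : Set.Ioi r ⊆ Function.support (fun x => 1 / (x^2 * (t + Real.log x)^2)) ∩ Set.Ioi r := by
      intro x hx
      refine ⟨?_, hx⟩
      have hx0 : 0 < x := lt_trans hr hx
      have hlx0 : 0 < t + Real.log x := hlx x (le_of_lt hx)
      have : 0 < 1 / (x^2 * (t + Real.log x)^2) := by positivity
      exact this.ne'
    calc (0:ℝ≥0∞) < volume (Set.Ioi r) := by simp [Real.volume_Ioi]
      _ ≤ _ := measure_mono hsub
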